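/- Let (K_1,…,K_n) be a Cantor-type graph-directed attractor in ℝ^d with level-k approximations Q_{i,k}, and set c(n,d) := (d−1)n² + (n²+n)/2 + d − 1. Then for every pair of distinct indices i, j ∈ {1,…,n}, K_i ∩ K_j ≠ ∅ if and only if Q_{i,c(n,d)} ∩ Q_{j,c(n,d)} ≠ ∅. -/

import Mathlib

open Set

/-- The closed unit cube `[0,1]^d` in `ℝ^d`. -/
def unitCube (d : ℕ) : Set (Fin d → ℝ) := {x | ∀ m, x m ∈ Set.Icc (0 : ℝ) 1}

/-- The contracting similarity `x ↦ N⁻¹(x + t)` on `ℝ^d`. -/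
noncomputable def cmap {d : ℕ} (N : ℕ) (t : Fin d → ℕ) (x : Fin d → ℝ) : Fin d → ℝ :=
  fun m => (x m + t m) / N

/-- The face of `[0,1]^d` determined by an index set `s` and prescribed values `a`
(`a m ∈ {0,1}` for `m ∈ s`); its dimension is `d - s.card`. -/
def face {d : ℕ} (s : Finset (Fin d)) (a : Fin d → ℝ) : Set (Fin d → ℝ) :=
  {x | x ∈ unitCube d ∧ ∀ m ∈ s, x m = a m}

/-- A Cantor-type graph-directed system: a finite directed multigraph on `Fin n`
in which every vertex has an outgoing edge, together with translation vectors
`t e ∈ {0,…,N-1}^d`; distinct parallel edges carry distinct vectors. -/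
structure CantorGDS (d N n : ℕ) where
  E : Type
  fintypeE : Fintype E
  src : E → Fin n
  dst : E → Fin n
  t : E → Fin d → ℕ
  t_lt : ∀ e m, t e m < N
  exists_out : ∀ v : Fin n, ∃ e : E, src e = v
  distinct : ∀ e e' : E, src e = src e' → dst e = dst e' → t e = t e' → e = e'

namespace CantorGDS

/-- The map `φ_e(x) = N⁻¹(x + t_e)` associated with an edge. -/
noncomputable def phi {d N n : ℕ} (S : CantorGDS d N n) (e : S.E) : (Fin d → ℝ) → (Fin d → ℝ) :=
  cmap N (S.t e)

/-- `(K 1, …, K n)` is the Cantor-type graph-directed attractor of `S`: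
an `n`-tuple of nonempty compact sets with `K i = ⋃_{j} ⋃_{e ∈ E_{i,j}} φ_e(K j)`. -/
def IsAttractor {d N n : ℕ} (S : CantorGDS d N n) (K : Fin n → Set (Fin d → ℝ)) : Prop :=
  (∀ i, (K i).Nonempty) ∧ (∀ i, IsCompact (K i)) ∧
    (∀ i, K i = ⋃ e : S.E, ⋃ _ : S.src e = i, S.phi e '' K (S.dst e))

/-- The level-`k` approximations: `Q 0 i = [0,1]^d` and
`Q (k+1) i = ⋃_{j} ⋃_{e ∈ E_{i,j}} φ_e(Q k j)`. -/
def Q {d N n : ℕ} (S : CantorGDS d N n) : ℕ → Fin n → Set (Fin d → ℝ)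
  | 0, _ => unitCube d
  | (k+1), i => ⋃ e : S.E, ⋃ _ : S.src e = i, S.phi e '' CantorGDS.Q S k (S.dst e)

/-- A solid edge from `(i,j)` to `(i',j')` in the intersecting graph:
`i ≠ j` and there are `e ∈ E_{i,i'}`, `e' ∈ E_{j,j'}` with `φ_e = φ_{e'}`. -/
def SolidEdge {d N n : ℕ} (S : CantorGDS d N n) (i j i' j' : Fin n) : Prop :=
  i ≠ j ∧ ∃ e e' : S.E, S.src e = i ∧ S.dst e = i' ∧ S.src e' = j ∧ S.dst e' = j' ∧
    S.t e = S.t e'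

/-- `e, e'` witness a dashed edge: the cubes `φ_e([0,1]^d)` and `φ_{e'}([0,1]^d)` share a
nonempty common face of dimension at most `d-1`; equivalently `t_e ≠ t_{e'}` and every
coordinate of `t_e - t_{e'}` lies in `{-1,0,1}`. -/
def DashedWitness {d N n : ℕ} (S : CantorGDS d N n) (e e' : S.E) : Prop :=
  S.t e ≠ S.t e' ∧ ∀ m, ((S.t e m : ℤ) - (S.t e' m : ℤ)).natAbs ≤ 1

/-- A terminated edge from `(i,j)` to `(i',j')` in the intersecting graph: either a solid
edge with `i' = j'`, or a dashed edge witnessed by `e, e'` with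
`φ_e(K i') ∩ φ_{e'}(K j') ≠ ∅`. -/
def TerminatedEdge {d N n : ℕ} (S : CantorGDS d N n) (K : Fin n → Set (Fin d → ℝ))
    (i j i' j' : Fin n) : Prop :=
  i ≠ j ∧ ∃ e e' : S.E, S.src e = i ∧ S.dst e = i' ∧ S.src e' = j ∧ S.dst e' = j' ∧
    ((S.t e = S.t e' ∧ i' = j') ∨
      (DashedWitness S e e' ∧ (S.phi e '' K i' ∩ S.phi e' '' K j').Nonempty))

/-- A solid walk of length `m` in the intersecting graph starting from `(i,j)`. -/
def SolidWalkOfLength {d N n : ℕ} (S : CantorGDS d N n) (m : ℕ) (i j : Fin n) : Prop :=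
  ∃ p q : ℕ → Fin n, p 0 = i ∧ q 0 = j ∧
    ∀ k < m, SolidEdge S (p k) (q k) (p (k + 1)) (q (k + 1))

/-- An infinite solid walk in the intersecting graph starting from `(i,j)`. -/
def InfSolidWalk {d N n : ℕ} (S : CantorGDS d N n) (i j : Fin n) : Prop :=
  ∃ p q : ℕ → Fin n, p 0 = i ∧ q 0 = j ∧
    ∀ k, SolidEdge S (p k) (q k) (p (k + 1)) (q (k + 1))

/-- A terminated finite walk in the intersecting graph starting from `(i,j)`: a walk of
length `m + 1` whose first `m` edges are solid and whose last edge is terminated. -/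
def TerminatedWalk {d N n : ℕ} (S : CantorGDS d N n) (K : Fin n → Set (Fin d → ℝ))
    (i j : Fin n) : Prop :=
  ∃ m : ℕ, ∃ p q : ℕ → Fin n, p 0 = i ∧ q 0 = j ∧
    (∀ k < m, SolidEdge S (p k) (q k) (p (k + 1)) (q (k + 1))) ∧
    TerminatedEdge S K (p m) (q m) (p (m + 1)) (q (m + 1))

/-- The edge relation of the graph `G_P`: there is an edge from `i` to `j` whenever
`P ∩ ⋃_{e ∈ E_{i,j}} φ_e([0,1]^d) ≠ ∅`. -/
def GPEdge {d N n : ℕ} (S : CantorGDS d N n) (P : Set (Fin d → ℝ)) (i j : Fin n) : Prop :=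
  ∃ e : S.E, S.src e = i ∧ S.dst e = j ∧ (P ∩ S.phi e '' unitCube d).Nonempty

/-- There is a walk of length `k` in the graph `G_P` starting from `i`. -/
def GPWalk {d N n : ℕ} (S : CantorGDS d N n) (P : Set (Fin d → ℝ)) (i : Fin n) (k : ℕ) :
    Prop :=
  ∃ p : ℕ → Fin n, p 0 = i ∧ ∀ l < k, GPEdge S P (p l) (p (l + 1))

/-- `l` is a walk in the directed graph of `S` starting from vertex `i`. -/
def WalkFrom {d N n : ℕ} (S : CantorGDS d N n) (i : Fin n) (l : List S.E) : Prop :=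
  (∀ e ∈ l.head?, S.src e = i) ∧ List.Chain' (fun e e' => S.dst e = S.src e') l

/-- The terminal vertex of a walk `l` starting from `i` (equal to `i` if `l` is empty). -/
def ter {d N n : ℕ} (S : CantorGDS d N n) (i : Fin n) (l : List S.E) : Fin n :=
  l.getLast?.elim i S.dst

/-- For a walk `𝐞 = (e_1, …, e_k)`, the composition `φ_𝐞 = φ_{e_1} ∘ ⋯ ∘ φ_{e_k}`. -/
noncomputable def phiWalk {d N n : ℕ} (S : CantorGDS d N n) (l : List S.E) :
    (Fin d → ℝ) → (Fin d → ℝ) :=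
  l.foldr (fun e f => S.phi e ∘ f) id

/-- For an infinite walk `e`, the composition `φ_{e 0} ∘ ⋯ ∘ φ_{e (m-1)}` of its first
`m` maps. -/
noncomputable def compWalk {d N n : ℕ} (S : CantorGDS d N n) (e : ℕ → S.E) :
    ℕ → (Fin d → ℝ) → (Fin d → ℝ)
  | 0 => id
  | (m + 1) => CantorGDS.compWalk S e m ∘ S.phi (e m)

end CantorGDS

/-- The constant `c(n,d) = (d-1)n² + (n²+n)/2 + d - 1`. -/
def cConst (n d : ℕ) : ℕ := (d - 1) * n ^ 2 + (n ^ 2 + n) / 2 + d - 1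

namespace CantorGDSAux

open CantorGDS

variable {d N n : ℕ} (S : CantorGDS d N n)

/-- The integer code of the first `k` edges of an infinite walk. -/
def code (e : ℕ → S.E) : ℕ → Fin d → ℤ
  | 0 => 0
  | (k+1) => fun m => N * code e k m + S.t (e k) m

/-- Difference of codes of two walks. -/
def dd (e f : ℕ → S.E) (k : ℕ) (m : Fin d) : ℤ := code S e k m - code S f k m

lemma dd_zero (e f : ℕ → S.E) (m : Fin d) : dd S e f 0 m = 0 := by
  simp [dd, code]

lemma dd_succ (e f : ℕ → S.E) (k : ℕ) (m : Fin d) :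
    dd S e f (k+1) m = N * dd S e f k m + ((S.t (e k) m : ℤ) - (S.t (f k) m : ℤ)) := by
  simp [dd, code]; ring

lemma code_nonneg (e : ℕ → S.E) (k : ℕ) (m : Fin d) : 0 ≤ code S e k m := by
  induction k with
  | zero => simp [code]
  | succ k ih => simpa [code] using add_nonneg (mul_nonneg (by positivity) ih) (by positivity)

lemma code_lt (hN : 1 ≤ N) (e : ℕ → S.E) (k : ℕ) (m : Fin d) :
    code S e k m < (N : ℤ) ^ k := by
  induction k with
  | zero => simp [code]
  | succ k ih =>
      have ht : (S.t (e k) m : ℤ) < N := by exact_mod_cast S.t_lt (e k) m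
      have hN' : (1 : ℤ) ≤ N := by exact_mod_cast hN
      calc code S e (k+1) m = N * code S e k m + S.t (e k) m := rfl
        _ ≤ N * (code S e k m) + (N - 1) := by omega
        _ ≤ N * ((N:ℤ)^k - 1) + (N - 1) := by
            have := mul_le_mul_of_nonneg_left (by omega : code S e k m ≤ (N:ℤ)^k - 1)
              (by omega : (0:ℤ) ≤ N)
            omega
        _ = N * (N:ℤ)^k - 1 := by ring
        _ < (N:ℤ)^(k+1) := by rw [pow_succ]; ring_nf; omega

lemma phi_continuous (e : S.E) : Continuous (S.phi e) := by
  refine continuous_pi fun m => ?_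
  exact ((continuous_apply m).add continuous_const).div_const _

lemma compWalk_continuous (e : ℕ → S.E) (k : ℕ) : Continuous (S.compWalk e k) := by
  induction k with
  | zero => exact continuous_id
  | succ k ih => exact ih.comp (phi_continuous S (e k))

lemma compWalk_apply (hN : 1 ≤ N) (e : ℕ → S.E) (k : ℕ) (x : Fin d → ℝ) (m : Fin d) :
    S.compWalk e k x m = (x m + (code S e k m : ℝ)) / (N : ℝ) ^ k := by
  have hN0 : (N : ℝ) ≠ 0 := by positivity
  induction k generalizing x with
  | zero => simp [CantorGDS.compWalk, code]
  | succ k ih =>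
      have hh : S.compWalk e (k+1) x = S.compWalk e k (S.phi (e k) x) := rfl
      rw [hh, ih]
      simp only [CantorGDS.phi, cmap, code]
      push_cast
      field_simp
      ring

/-- Prepend a value to a sequence. -/
def cons {α : Type _} (e0 : α) (e : ℕ → α) : ℕ → α := fun k => Nat.casesOn k e0 e

lemma compWalk_cons (e0 : S.E) (e : ℕ → S.E) (k : ℕ) :
    S.compWalk (cons e0 e) (k+1) = S.phi e0 ∘ S.compWalk e k := by
  induction k with
  | zero => rfl
  | succ k ih =>
      show S.compWalk (cons e0 e) (k+1) ∘ S.phi (e k) = _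
      rw [ih]; rfl

end CantorGDSAux

namespace CantorGDSAux

open CantorGDS

variable {d N n : ℕ} (S : CantorGDS d N n)

lemma le_zero_of_forall_le_div {C a : ℝ} (hN : 2 ≤ N) (hC : 0 ≤ C)
    (h : ∀ k : ℕ, a ≤ C / (N : ℝ) ^ k) : a ≤ 0 := by
  by_contra h'
  push_neg at h'
  have hN1 : (1 : ℝ) < (N : ℝ) := by exact_mod_cast (by omega : 1 < N)
  obtain ⟨k, hk⟩ := pow_unbounded_of_one_lt (C / a) hN1
  have hpow : (0:ℝ) < (N:ℝ) ^ k := by positivity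
  have := h k
  have : C / (N:ℝ)^k < a := by
    rw [div_lt_iff₀ hpow]
    calc C = (C / a) * a := by field_simp
    _ < (N:ℝ)^k * a := by exact mul_lt_mul_of_pos_right hk h'
    _ = a * (N:ℝ)^k := by ring
  linarith [h k]

/-- Every point of the attractor lies at depth `k` inside some piece. -/
lemma attractor_piece (K : Fin n → Set (Fin d → ℝ)) (hK : S.IsAttractor K)
    (k : ℕ) : ∀ (i : Fin n), ∀ x ∈ K i,
    ∃ (e : ℕ → S.E) (j' : Fin n) (z : Fin d → ℝ), z ∈ K j' ∧ x = S.compWalk e k z := by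
  induction k with
  | zero =>
      intro i x hx
      obtain ⟨e0, -⟩ := S.exists_out i
      exact ⟨fun _ => e0, i, x, hx, rfl⟩
  | succ k ih =>
      intro i x hx
      rw [hK.2.2 i] at hx
      simp only [Set.mem_iUnion] at hx
      obtain ⟨e0, -, x', hx', hphix⟩ := hx
      obtain ⟨e, j', z, hz, hxe⟩ := ih (S.dst e0) x' hx'
      refine ⟨cons e0 e, j', z, hz, ?_⟩
      rw [compWalk_cons]
      simp [← hphix, hxe]

/-- The attractor is contained in the unit cube. -/
lemma attractor_subset_unitCube (hN : 2 ≤ N) (K : Fin n → Set (Fin d → ℝ))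
    (hK : S.IsAttractor K) (i : Fin n) : K i ⊆ unitCube d := by
  have hN1 : 1 ≤ N := by omega
  -- uniform bound on all K j
  have hbdd : ∀ j : Fin n, ∃ C : ℝ, ∀ x ∈ K j, ∀ m, |x m| ≤ C := by
    intro j
    obtain ⟨r, hr⟩ := (Metric.isBounded_iff_subset_closedBall 0).mp (hK.2.1 j).isBounded
    refine ⟨r, fun x hx m => ?_⟩
    have h1 := dist_le_pi_dist x 0 m
    have h2 := hr hx
    rw [Metric.mem_closedBall] at h2
    simp only [Pi.zero_apply, Real.dist_eq, sub_zero] at h1 ⊢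
    exact le_trans h1 (le_trans (by exact le_of_eq rfl) h2)
  choose Cf hCf using hbdd
  set C : ℝ := max (Finset.univ.sup' ⟨i, Finset.mem_univ i⟩ Cf) 0 with hCdef
  have hC0 : 0 ≤ C := le_max_right _ _
  have hCb : ∀ j : Fin n, ∀ x ∈ K j, ∀ m, |x m| ≤ C := by
    intro j x hx m
    exact le_trans (hCf j x hx m) (le_trans (Finset.le_sup' Cf (Finset.mem_univ j)) (le_max_left _ _))
  intro x hx m
  have key : ∀ k : ℕ, x m ≤ 1 + C / (N:ℝ)^k ∧ -(C / (N:ℝ)^k) ≤ x m := by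
    intro k
    obtain ⟨e, j', z, hz, hxe⟩ := attractor_piece S K hK k i x hx
    have hzb := hCb j' z hz m
    have hxm : x m = (z m + (code S e k m : ℝ)) / (N:ℝ)^k := by
      rw [hxe, compWalk_apply S hN1]
    have hpow : (0:ℝ) < (N:ℝ)^k := by positivity
    have hcode0 : (0:ℝ) ≤ (code S e k m : ℝ) := by exact_mod_cast code_nonneg S e k m
    have hcodelt : (code S e k m : ℝ) < (N:ℝ)^k := by exact_mod_cast code_lt S hN1 e k m
    constructor
    · rw [hxm, div_le_iff₀ hpow]
      have : |z m| ≤ C := hzb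
      have h1 : z m ≤ C := (abs_le.mp this).2
      have : (1 + C / (N:ℝ)^k) * (N:ℝ)^k = (N:ℝ)^k + C := by field_simp
      rw [this]; linarith
    · rw [hxm, le_div_iff₀ hpow]
      have h1 : -C ≤ z m := (abs_le.mp hzb).1
      have : -(C / (N:ℝ)^k) * (N:ℝ)^k = -C := by field_simp
      rw [this]; linarith
  constructor
  · have : ∀ k : ℕ, -(x m) ≤ C / (N:ℝ)^k := fun k => by linarith [(key k).2]
    have := le_zero_of_forall_le_div (a := -(x m)) hN hC0 this
    linarith
  · have : ∀ k : ℕ, x m - 1 ≤ C / (N:ℝ)^k := fun k => by linarith [(key k).1]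
    have := le_zero_of_forall_le_div (a := x m - 1) hN hC0 this
    linarith

/-- Forward inclusion: the attractor is contained in every approximation. -/
lemma attractor_subset_Q (hN : 2 ≤ N) (K : Fin n → Set (Fin d → ℝ))
    (hK : S.IsAttractor K) (k : ℕ) : ∀ i, K i ⊆ CantorGDS.Q S k i := by
  induction k with
  | zero => exact fun i => attractor_subset_unitCube S hN K hK i
  | succ k ih =>
      intro i x hx
      rw [hK.2.2 i] at hx
      simp only [CantorGDS.Q, Set.mem_iUnion] at hx ⊢
      obtain ⟨e0, he0, x', hx', hphix⟩ := hx
      exact ⟨e0, he0, x', ih _ hx', hphix⟩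

/-- Extraction of a walk from membership in `Q`. -/
lemma mem_Q_elim (k : ℕ) : ∀ (i : Fin n), ∀ x ∈ CantorGDS.Q S k i,
    ∃ (e : ℕ → S.E) (p : ℕ → Fin n), p 0 = i ∧
      (∀ l < k, S.src (e l) = p l ∧ S.dst (e l) = p (l+1)) ∧
      ∃ ξ ∈ unitCube d, x = S.compWalk e k ξ := by
  induction k with
  | zero =>
      intro i x hx
      obtain ⟨e0, -⟩ := S.exists_out i
      exact ⟨fun _ => e0, fun _ => i, rfl, fun l hl => absurd hl (by omega), x, hx, rfl⟩
  | succ k ih =>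
      intro i x hx
      simp only [CantorGDS.Q, Set.mem_iUnion] at hx
      obtain ⟨e0, he0, x', hx', hphix⟩ := hx
      obtain ⟨e, p, hp0, hchain, ξ, hξ, hxe⟩ := ih (S.dst e0) x' hx'
      refine ⟨cons e0 e, cons i p, rfl, ?_, ξ, hξ, ?_⟩
      · intro l hl
        cases l with
        | zero => exact ⟨he0, by simpa [cons] using hp0.symm⟩
        | succ l => exact hchain l (by omega)
      · rw [compWalk_cons]
        simp [← hphix, hxe]

end CantorGDSAux

namespace CantorGDSAux

open CantorGDS

variable {d N n : ℕ} (S : CantorGDS d N n)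

/-- **Key limit lemma**: an infinite pair of walks from `i` and `j` whose codes stay
adjacent at every level forces `K i ∩ K j ≠ ∅`. -/
lemma key_limit (hN : 2 ≤ N) (K : Fin n → Set (Fin d → ℝ)) (hK : S.IsAttractor K)
    (i j : Fin n) (e f : ℕ → S.E)
    (hce : ∀ k, S.dst (e k) = S.src (e (k+1))) (hcf : ∀ k, S.dst (f k) = S.src (f (k+1)))
    (he0 : S.src (e 0) = i) (hf0 : S.src (f 0) = j)
    (hδ : ∀ k m, (dd S e f k m).natAbs ≤ 1) :
    (K i ∩ K j).Nonempty := by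
  have hN1 : 1 ≤ N := by omega
  set A : ℕ → Set (Fin d → ℝ) := fun k => S.compWalk e k '' K (S.src (e k)) with hA
  set B : ℕ → Set (Fin d → ℝ) := fun k => S.compWalk f k '' K (S.src (f k)) with hB
  have hsub : ∀ (g : ℕ → S.E) (hcg : ∀ k, S.dst (g k) = S.src (g (k+1))) (k : ℕ),
      S.compWalk g (k+1) '' K (S.src (g (k+1))) ⊆ S.compWalk g k '' K (S.src (g k)) := by
    intro g hcg k
    have h1 : S.compWalk g (k+1) = S.compWalk g k ∘ S.phi (g k) := rfl
    rw [h1, Set.image_comp]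
    apply Set.image_mono
    rw [← hcg k]
    rw [hK.2.2 (S.src (g k))]
    intro y hy
    simp only [Set.mem_iUnion]
    exact ⟨g k, rfl, hy⟩
  have hcompact : ∀ (g : ℕ → S.E) (k : ℕ), IsCompact (S.compWalk g k '' K (S.src (g k))) :=
    fun g k => (hK.2.1 _).image (compWalk_continuous S g k)
  have hne : ∀ (g : ℕ → S.E) (k : ℕ), (S.compWalk g k '' K (S.src (g k))).Nonempty :=
    fun g k => (hK.1 _).image _
  have hAx : (⋂ k, A k).Nonempty :=
    IsCompact.nonempty_iInter_of_sequence_nonempty_isCompact_isClosed A (hsub e hce)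
      (hne e) (hcompact e 0) (fun k => (hcompact e k).isClosed)
  have hBx : (⋂ k, B k).Nonempty :=
    IsCompact.nonempty_iInter_of_sequence_nonempty_isCompact_isClosed B (hsub f hcf)
      (hne f) (hcompact f 0) (fun k => (hcompact f k).isClosed)
  obtain ⟨x, hx⟩ := hAx
  obtain ⟨y, hy⟩ := hBx
  have hxKi : x ∈ K i := by
    have := Set.mem_iInter.mp hx 0
    simpa [hA, CantorGDS.compWalk, he0] using this
  have hyKj : y ∈ K j := by
    have := Set.mem_iInter.mp hy 0
    simpa [hB, CantorGDS.compWalk, hf0] using this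
  have hxy : x = y := by
    funext m
    have hdist : ∀ k : ℕ, |x m - y m| ≤ 2 / (N:ℝ)^k := by
      intro k
      obtain ⟨z, hz, hxz⟩ := Set.mem_iInter.mp hx k
      obtain ⟨w, hw, hyw⟩ := Set.mem_iInter.mp hy k
      have hzc := attractor_subset_unitCube S hN K hK _ hz m
      have hwc := attractor_subset_unitCube S hN K hK _ hw m
      have hxm : x m = (z m + (code S e k m : ℝ)) / (N:ℝ)^k := by
        rw [← hxz, compWalk_apply S hN1]
      have hym : y m = (w m + (code S f k m : ℝ)) / (N:ℝ)^k := by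
        rw [← hyw, compWalk_apply S hN1]
      have hpow : (0:ℝ) < (N:ℝ)^k := by positivity
      have hδk : |(code S e k m : ℝ) - (code S f k m : ℝ)| ≤ 1 := by
        have h1 := hδ k m
        have : ((dd S e f k m).natAbs : ℝ) ≤ 1 := by exact_mod_cast h1
        rw [Nat.cast_natAbs] at this
        simpa [dd] using this
      rw [hxm, hym, div_sub_div_same, abs_div, abs_of_pos hpow, div_le_div_iff₀ hpow hpow]
      have h1 : |z m - w m| ≤ 1 := by
        rw [abs_le]; constructor <;> [linarith [hzc.1, hwc.2]; linarith [hzc.2, hwc.1]]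
      calc |z m + (code S e k m : ℝ) - (w m + (code S f k m : ℝ))| * (N:ℝ)^k
          ≤ (|z m - w m| + |(code S e k m : ℝ) - (code S f k m : ℝ)|) * (N:ℝ)^k := by
            apply mul_le_mul_of_nonneg_right _ (le_of_lt hpow)
            apply le_trans (le_of_eq (by ring_nf)) (abs_add_le _ _)
        _ ≤ 2 * (N:ℝ)^k := by nlinarith
    have : |x m - y m| ≤ 0 := by
      apply le_zero_of_forall_le_div hN (by norm_num : (0:ℝ) ≤ 2)
      intro k; exact hdist k
    have : |x m - y m| = 0 := le_antisymm this (abs_nonneg _)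
    linarith [abs_eq_zero.mp this, sub_eq_zero.mp (abs_eq_zero.mp this)]
  exact ⟨x, hxKi, hxy ▸ hyKj⟩

end CantorGDSAux

namespace CantorGDSAux

open CantorGDS

variable {d N n : ℕ} (S : CantorGDS d N n)

/-- Wrap-around reindexing: identity below `a + π`, then period `π` starting at `a`. -/
def wrap (a π k : ℕ) : ℕ := if k < a then k else a + (k - a) % π

lemma wrap_lt {π : ℕ} (hπ : 0 < π) (a k : ℕ) : wrap a π k < a + π := by
  unfold wrap
  split
  · omega
  · have := Nat.mod_lt (k - a) hπ
    omega

lemma wrap_eq_self {a π k : ℕ} (h : k < a + π) : wrap a π k = k := by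
  unfold wrap
  split
  · rfl
  · have : (k - a) % π = k - a := Nat.mod_eq_of_lt (by omega)
    omega

lemma wrap_zero (a π : ℕ) : wrap a π 0 = 0 := by
  unfold wrap; split
  · rfl
  · simp; omega

lemma wrap_ge {a π : ℕ} (k : ℕ) (h : a ≤ k) : a ≤ wrap a π k := by
  unfold wrap; split <;> omega

lemma mod_succ_cases {π : ℕ} (hπ : 0 < π) (x : ℕ) :
    (x + 1) % π = x % π + 1 ∨ (x % π + 1 = π ∧ (x + 1) % π = 0) := by
  have h1 : x % π < π := Nat.mod_lt x hπ
  have h2 : x = π * (x / π) + x % π := (Nat.div_add_mod x π).symm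
  by_cases h : x % π + 1 < π
  · left
    have : x + 1 = (x % π + 1) + π * (x / π) := by omega
    rw [this, Nat.add_mul_mod_self_left, Nat.mod_eq_of_lt h]
  · right
    have hx : x % π + 1 = π := by omega
    refine ⟨hx, ?_⟩
    have hms : π * (x / π + 1) = π * (x / π) + π := Nat.mul_succ π (x / π)
    have : x + 1 = π * (x / π + 1) := by omega
    rw [this, Nat.mul_mod_right]

lemma wrap_succ {π : ℕ} (hπ : 0 < π) (a k : ℕ) :
    wrap a π (k + 1) = wrap a π k + 1 ∨
      (wrap a π k + 1 = a + π ∧ wrap a π (k + 1) = a) := by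
  by_cases h1 : k + 1 < a
  · left; rw [wrap_eq_self (by omega), wrap_eq_self (by omega)]
  · by_cases h2 : k + 1 = a
    · left
      rw [wrap_eq_self (by omega : k < a + π)]
      unfold wrap
      simp only [if_neg (by omega : ¬ (k + 1 < a))]
      have h0 : k + 1 - a = 0 := by omega
      rw [h0, Nat.zero_mod]
      omega
    · -- k ≥ a
      have ha : a ≤ k := by omega
      have hk : wrap a π k = a + (k - a) % π := by unfold wrap; rw [if_neg (by omega)]
      have hk1 : wrap a π (k+1) = a + (k - a + 1) % π := by
        unfold wrap; rw [if_neg (by omega)]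
        congr 2
        omega
      rcases mod_succ_cases hπ (k - a) with h | ⟨h, h'⟩
      · left; omega
      · right; omega

/-- chains are preserved by wrapping. -/
lemma chain_wrap {a π : ℕ} (hπ : 0 < π) (e : ℕ → S.E)
    (hc : ∀ k, k + 1 < a + π → S.dst (e k) = S.src (e (k+1)))
    (hm : S.dst (e (a + π - 1)) = S.src (e a)) (k : ℕ) :
    S.dst (e (wrap a π k)) = S.src (e (wrap a π (k+1))) := by
  rcases wrap_succ hπ a k with h | ⟨h, h'⟩
  · rw [h]
    exact hc _ (h ▸ wrap_lt hπ a (k+1))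
  · rw [h']
    have : wrap a π k = a + π - 1 := by omega
    rw [this]; exact hm

lemma dd_wrap {a π : ℕ} (hπ : 0 < π) (e f : ℕ → S.E)
    (hdm : ∀ m, dd S e f (a + π) m = dd S e f a m) (k : ℕ) (m : Fin d) :
    dd S (fun l => e (wrap a π l)) (fun l => f (wrap a π l)) k m = dd S e f (wrap a π k) m := by
  induction k with
  | zero => rw [wrap_zero, dd_zero, dd_zero]
  | succ k ih =>
      rw [dd_succ, ih]
      rcases wrap_succ hπ a k with h | ⟨h, h'⟩
      · rw [h, dd_succ]
      · rw [h', ← hdm m, ← h, dd_succ]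

/-- **Pumping lemma**: a finite pair walk whose state repeats yields an infinite
adjacent pair walk. -/
lemma pump (a π : ℕ) (hπ : 0 < π) (e f : ℕ → S.E)
    (hce : ∀ k, k + 1 < a + π → S.dst (e k) = S.src (e (k+1)))
    (hcf : ∀ k, k + 1 < a + π → S.dst (f k) = S.src (f (k+1)))
    (hme : S.dst (e (a + π - 1)) = S.src (e a))
    (hmf : S.dst (f (a + π - 1)) = S.src (f a))
    (hδ : ∀ k ≤ a + π, ∀ m, (dd S e f k m).natAbs ≤ 1)
    (hdm : ∀ m, dd S e f (a + π) m = dd S e f a m) :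
    ∃ ebar fbar : ℕ → S.E,
      (∀ k, S.dst (ebar k) = S.src (ebar (k+1))) ∧
      (∀ k, S.dst (fbar k) = S.src (fbar (k+1))) ∧
      S.src (ebar 0) = S.src (e 0) ∧ S.src (fbar 0) = S.src (f 0) ∧
      (∀ k m, (dd S ebar fbar k m).natAbs ≤ 1) := by
  refine ⟨fun l => e (wrap a π l), fun l => f (wrap a π l),
    fun k => chain_wrap S hπ e hce hme k, fun k => chain_wrap S hπ f hcf hmf k,
    by simp [wrap_zero], by simp [wrap_zero], fun k m => ?_⟩
  rw [dd_wrap S hπ e f hdm]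
  exact hδ _ (le_of_lt (wrap_lt hπ a k)) m

/-- An arbitrary infinite walk out of a vertex. -/
noncomputable def extWalk (v : Fin n) : ℕ → S.E
  | 0 => Classical.choose (S.exists_out v)
  | (k+1) => Classical.choose (S.exists_out (S.dst (extWalk v k)))

lemma extWalk_src_zero (v : Fin n) : S.src (extWalk S v 0) = v :=
  Classical.choose_spec (S.exists_out v)

lemma extWalk_chain (v : Fin n) (k : ℕ) :
    S.dst (extWalk S v k) = S.src (extWalk S v (k+1)) :=
  (Classical.choose_spec (S.exists_out (S.dst (extWalk S v k)))).symm

end CantorGDSAux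

namespace CantorGDSAux

open CantorGDS

variable {d N n : ℕ} (S : CantorGDS d N n)

lemma t_bounds (hN : 2 ≤ N) (e : S.E) (m : Fin d) :
    (0:ℤ) ≤ (S.t e m : ℤ) ∧ (S.t e m : ℤ) ≤ (N:ℤ) - 1 := by
  have := S.t_lt e m
  constructor
  · positivity
  · omega

lemma dd_grow (hN : 2 ≤ N) (e f : ℕ → S.E) (l : ℕ) (m : Fin d)
    (h : 2 ≤ (dd S e f l m).natAbs) : 2 ≤ (dd S e f (l+1) m).natAbs := by
  have hrec := dd_succ S e f l m
  obtain ⟨h1, h2⟩ := t_bounds S hN (e l) m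
  obtain ⟨h3, h4⟩ := t_bounds S hN (f l) m
  have hN' : (2:ℤ) ≤ (N:ℤ) := by exact_mod_cast hN
  rcases (by omega : 2 ≤ dd S e f l m ∨ dd S e f l m ≤ -2) with hg | hg
  · have : 2 * (N:ℤ) ≤ (N:ℤ) * dd S e f l m := by nlinarith
    omega
  · have : (N:ℤ) * dd S e f l m ≤ -(2 * (N:ℤ)) := by nlinarith
    omega

lemma dd_bound_all (hN : 2 ≤ N) (e f : ℕ → S.E) (c : ℕ)
    (hc : ∀ m, (dd S e f c m).natAbs ≤ 1) :
    ∀ l, l ≤ c → ∀ m, (dd S e f l m).natAbs ≤ 1 := by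
  have key : ∀ r l, l + r = c → ∀ m, 2 ≤ (dd S e f l m).natAbs →
      2 ≤ (dd S e f c m).natAbs := by
    intro r
    induction r with
    | zero =>
        intro l hl m h
        have hlc : l = c := by omega
        subst hlc; exact h
    | succ r ih =>
        intro l hl m h
        exact ih (l+1) (by omega) m (dd_grow S hN e f l m h)
  intro l hl m
  by_contra h
  have := key (c - l) l (by omega) m (by omega)
  have := hc m
  omega

lemma dd_freeze (hN : 2 ≤ N) (e f : ℕ → S.E) (c : ℕ)
    (hb : ∀ l, l ≤ c → ∀ m, (dd S e f l m).natAbs ≤ 1) :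
    ∀ l, l + 1 ≤ c → ∀ m, dd S e f l m ≠ 0 → dd S e f (l+1) m = dd S e f l m := by
  intro l hl m hne
  have hrec := dd_succ S e f l m
  obtain ⟨h1, h2⟩ := t_bounds S hN (e l) m
  obtain ⟨h3, h4⟩ := t_bounds S hN (f l) m
  have hN' : (2:ℤ) ≤ (N:ℤ) := by exact_mod_cast hN
  have hbl := hb l (by omega) m
  have hbl1 := hb (l+1) (by omega) m
  rcases (by omega : dd S e f l m = 1 ∨ dd S e f l m = -1) with hg | hg <;>
    rw [hg] at hrec ⊢ <;> omega

lemma dd_prop (hN : 2 ≤ N) (e f : ℕ → S.E) (c : ℕ)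
    (hb : ∀ l, l ≤ c → ∀ m, (dd S e f l m).natAbs ≤ 1) :
    ∀ r l, l + r ≤ c → ∀ m, dd S e f l m ≠ 0 → dd S e f (l+r) m = dd S e f l m := by
  intro r
  induction r with
  | zero => intro l hl m h; rfl
  | succ r ih =>
      intro l hl m h
      have h1 := ih l (by omega) m h
      have h2 := dd_freeze S hN e f c hb (l+r) (by omega) m (by rw [h1]; exact h)
      rw [show l + (r+1) = (l+r)+1 by omega, h2, h1]

/-- Number of nonzero coordinates of the code difference. -/
noncomputable def kappa (e f : ℕ → S.E) (l : ℕ) : ℕ :=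
  (Finset.univ.filter (fun m : Fin d => dd S e f l m ≠ 0)).card

lemma supp_subset (hN : 2 ≤ N) (e f : ℕ → S.E) (c : ℕ)
    (hb : ∀ l, l ≤ c → ∀ m, (dd S e f l m).natAbs ≤ 1)
    {l l' : ℕ} (hll : l ≤ l') (hl'c : l' ≤ c) :
    (Finset.univ.filter (fun m : Fin d => dd S e f l m ≠ 0)) ⊆
      (Finset.univ.filter (fun m : Fin d => dd S e f l' m ≠ 0)) := by
  intro m hm
  simp only [Finset.mem_filter, Finset.mem_univ, true_and] at hm ⊢
  have := dd_prop S hN e f c hb (l' - l) l (by omega) m hm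
  rw [show l + (l' - l) = l' by omega] at this
  rw [this]; exact hm

lemma kappa_mono (hN : 2 ≤ N) (e f : ℕ → S.E) (c : ℕ)
    (hb : ∀ l, l ≤ c → ∀ m, (dd S e f l m).natAbs ≤ 1)
    {l l' : ℕ} (hll : l ≤ l') (hl'c : l' ≤ c) :
    kappa S e f l ≤ kappa S e f l' :=
  Finset.card_le_card (supp_subset S hN e f c hb hll hl'c)

lemma kappa_le (e f : ℕ → S.E) (l : ℕ) : kappa S e f l ≤ d := by
  have := Finset.card_filter_le (Finset.univ : Finset (Fin d))
    (fun m => dd S e f l m ≠ 0)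
  simpa [kappa] using this

lemma dd_eq_of_kappa_eq (hN : 2 ≤ N) (e f : ℕ → S.E) (c : ℕ)
    (hb : ∀ l, l ≤ c → ∀ m, (dd S e f l m).natAbs ≤ 1)
    {l l' : ℕ} (hll : l ≤ l') (hl'c : l' ≤ c) (hk : kappa S e f l = kappa S e f l') :
    ∀ m, dd S e f l' m = dd S e f l m := by
  have hsub := supp_subset S hN e f c hb hll hl'c
  have heq := Finset.eq_of_subset_of_card_le hsub (le_of_eq hk.symm)
  intro m
  by_cases hm : dd S e f l m ≠ 0
  · have := dd_prop S hN e f c hb (l' - l) l (by omega) m hm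
    rwa [show l + (l' - l) = l' by omega] at this
  · push_neg at hm
    rw [hm]
    by_contra h
    have hmem : m ∈ (Finset.univ.filter (fun m : Fin d => dd S e f l' m ≠ 0)) := by
      simp only [Finset.mem_filter, Finset.mem_univ, true_and]; exact h
    rw [← heq] at hmem
    simp only [Finset.mem_filter, Finset.mem_univ, true_and] at hmem
    exact hmem hm

/-- Cardinality of the set of strictly increasing pairs. -/
lemma card_lt_pairs (n : ℕ) :
    2 * ((Finset.univ : Finset (Fin n × Fin n)).filter (fun ab => ab.1 < ab.2)).card + n
      = n * n := by
  classical
  set U := (Finset.univ : Finset (Fin n × Fin n))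
  have h1 := Finset.card_filter_add_card_filter_not
    (s := U) (p := fun ab : Fin n × Fin n => ab.1 < ab.2)
  have h2 := Finset.card_filter_add_card_filter_not
    (s := U.filter (fun ab : Fin n × Fin n => ¬ ab.1 < ab.2))
    (p := fun ab : Fin n × Fin n => ab.2 < ab.1)
  have hU : U.card = n * n := by simp [U]
  have hY : ((U.filter (fun ab : Fin n × Fin n => ¬ ab.1 < ab.2)).filter
      (fun ab : Fin n × Fin n => ab.2 < ab.1)).card
      = (U.filter (fun ab : Fin n × Fin n => ab.1 < ab.2)).card := by
    rw [Finset.filter_filter]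
    rw [show (U.filter fun ab : Fin n × Fin n => ¬ab.1 < ab.2 ∧ ab.2 < ab.1)
        = (U.filter (fun ab : Fin n × Fin n => ab.1 < ab.2)).image Prod.swap from ?_]
    · rw [Finset.card_image_of_injective _ Prod.swap_injective]
    · ext ⟨a, b⟩
      simp only [Finset.mem_filter, Finset.mem_univ, true_and, Finset.mem_image, U,
        Prod.swap_prod_mk, Prod.mk.injEq]
      constructor
      · rintro ⟨h1, h2⟩
        exact ⟨(b, a), h2, rfl⟩
      · rintro ⟨⟨x, y⟩, h, hxy⟩
        rw [Prod.swap_prod_mk, Prod.mk.injEq] at hxy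
        obtain ⟨hx, hy⟩ := hxy
        subst hx; subst hy
        exact ⟨not_lt.mpr (le_of_lt h), h⟩
  have hD : ((U.filter (fun ab : Fin n × Fin n => ¬ ab.1 < ab.2)).filter
      (fun ab : Fin n × Fin n => ¬ ab.2 < ab.1)).card = n := by
    rw [Finset.filter_filter]
    rw [show (U.filter fun ab : Fin n × Fin n => ¬ab.1 < ab.2 ∧ ¬ab.2 < ab.1)
        = (Finset.univ : Finset (Fin n)).image (fun a => (a, a)) from ?_]
    · rw [Finset.card_image_of_injective _
        (Function.LeftInverse.injective (g := Prod.fst) (fun a => rfl))]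
      simp
    · ext ⟨a, b⟩
      simp only [Finset.mem_filter, Finset.mem_univ, true_and, Finset.mem_image, U,
        Prod.mk.injEq]
      constructor
      · rintro ⟨hab, hba⟩
        exact ⟨a, rfl, le_antisymm (not_lt.mp hba) (not_lt.mp hab)⟩
      · rintro ⟨x, hx, hx'⟩
        subst hx; subst hx'
        exact ⟨lt_irrefl _, lt_irrefl _⟩
  omega

end CantorGDSAux

namespace CantorGDSAux

open CantorGDS

variable {d N n : ℕ} (S : CantorGDS d N n)

lemma caseE0 (hN : 2 ≤ N) (K : Fin n → Set (Fin d → ℝ)) (hK : S.IsAttractor K)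
    (i j : Fin n) (c : ℕ) (e f : ℕ → S.E) (p q : ℕ → Fin n)
    (hp0 : p 0 = i) (hq0 : q 0 = j)
    (hpc : ∀ l < c, S.src (e l) = p l ∧ S.dst (e l) = p (l+1))
    (hqc : ∀ l < c, S.src (f l) = q l ∧ S.dst (f l) = q (l+1))
    (hb : ∀ l, l ≤ c → ∀ m, (dd S e f l m).natAbs ≤ 1)
    (l : ℕ) (hl : l ≤ c) (hδ0 : ∀ m, dd S e f l m = 0) (hpq : p l = q l) :
    (K i ∩ K j).Nonempty := by
  set ebar : ℕ → S.E := fun k => if k < l then e k else extWalk S (p l) (k - l) with hebar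
  set fbar : ℕ → S.E := fun k => if k < l then f k else extWalk S (p l) (k - l) with hfbar
  have hch : ∀ (g : ℕ → S.E) (pg : ℕ → Fin n),
      (∀ l' < c, S.src (g l') = pg l' ∧ S.dst (g l') = pg (l'+1)) → pg l = p l →
      ∀ k, S.dst ((fun k => if k < l then g k else extWalk S (p l) (k - l)) k)
        = S.src ((fun k => if k < l then g k else extWalk S (p l) (k - l)) (k+1)) := by
    intro g pg hgc hgl k
    by_cases h1 : k + 1 < l
    · simp only [if_pos h1, if_pos (by omega : k < l)]
      exact ((hgc k (by omega)).2).trans ((hgc (k+1) (by omega)).1).symm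
    · by_cases h2 : k + 1 = l
      · simp only [if_pos (by omega : k < l), if_neg (by omega : ¬ k + 1 < l)]
        rw [show k + 1 - l = 0 by omega, extWalk_src_zero, ← hgl, ← h2]
        exact (hgc k (by omega)).2
      · simp only [if_neg (by omega : ¬ k < l), if_neg (by omega : ¬ k + 1 < l)]
        rw [show k + 1 - l = (k - l) + 1 by omega]
        exact extWalk_chain S (p l) (k - l)
  have hce : ∀ k, S.dst (ebar k) = S.src (ebar (k+1)) := hch e p hpc rfl
  have hcf : ∀ k, S.dst (fbar k) = S.src (fbar (k+1)) := hch f q hqc hpq.symm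
  have hs1 : S.src (ebar 0) = i := by
    by_cases h0 : 0 < l
    · simp only [hebar, if_pos h0]
      rw [(hpc 0 (by omega)).1, hp0]
    · have hl0 : l = 0 := by omega
      simp only [hebar, if_neg (by omega : ¬ (0:ℕ) < l)]
      rw [show 0 - l = 0 from by omega, extWalk_src_zero, hl0, hp0]
  have hs2 : S.src (fbar 0) = j := by
    by_cases h0 : 0 < l
    · simp only [hfbar, if_pos h0]
      rw [(hqc 0 (by omega)).1, hq0]
    · have hl0 : l = 0 := by omega
      simp only [hfbar, if_neg (by omega : ¬ (0:ℕ) < l)]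
      rw [show 0 - l = 0 from by omega, extWalk_src_zero, hl0]
      rw [hl0] at hpq
      rw [hpq, hq0]
  have claimA : ∀ k, k ≤ l → ∀ m, dd S ebar fbar k m = dd S e f k m := by
    intro k
    induction k with
    | zero => intro _ m; rw [dd_zero, dd_zero]
    | succ k ih =>
        intro hk m
        rw [dd_succ, dd_succ, ih (by omega) m]
        simp only [hebar, hfbar, if_pos (by omega : k < l)]
  have claimB : ∀ r m, dd S ebar fbar (l + r) m = 0 := by
    intro r
    induction r with
    | zero => intro m; rw [Nat.add_zero, claimA l le_rfl m]; exact hδ0 m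
    | succ r ih =>
        intro m
        rw [show l + (r+1) = (l+r)+1 by omega, dd_succ, ih m]
        simp only [hebar, hfbar, if_neg (by omega : ¬ l + r < l)]
        ring
  refine key_limit S hN K hK i j ebar fbar hce hcf hs1 hs2 fun k m => ?_
  rcases le_or_gt k l with h | h
  · rw [claimA k h m]; exact hb k (le_trans h hl) m
  · rw [show k = l + (k - l) by omega, claimB (k - l) m]; simp

lemma caseE1 (hN : 2 ≤ N) (K : Fin n → Set (Fin d → ℝ)) (hK : S.IsAttractor K)
    (i j : Fin n) (c : ℕ) (e f : ℕ → S.E) (p q : ℕ → Fin n)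
    (hp0 : p 0 = i) (hq0 : q 0 = j)
    (hpc : ∀ l < c, S.src (e l) = p l ∧ S.dst (e l) = p (l+1))
    (hqc : ∀ l < c, S.src (f l) = q l ∧ S.dst (f l) = q (l+1))
    (hb : ∀ l, l ≤ c → ∀ m, (dd S e f l m).natAbs ≤ 1)
    (l l' : ℕ) (hll : l < l') (hl'c : l' ≤ c)
    (hp : p l = p l') (hq : q l = q l') (hdd : ∀ m, dd S e f l m = dd S e f l' m) :
    (K i ∩ K j).Nonempty := by
  have hπ : 0 < l' - l := by omega
  have hap : l + (l' - l) = l' := by omega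
  have hme : ∀ (g : ℕ → S.E) (pg : ℕ → Fin n),
      (∀ k < c, S.src (g k) = pg k ∧ S.dst (g k) = pg (k+1)) → pg l = pg l' →
      S.dst (g (l + (l' - l) - 1)) = S.src (g l) := by
    intro g pg hgc hgl
    rw [show l + (l' - l) - 1 = l' - 1 by omega]
    have h1 := (hgc (l' - 1) (by omega)).2
    rw [show l' - 1 + 1 = l' by omega] at h1
    rw [h1, ← hgl, (hgc l (by omega)).1]
  have hchain : ∀ (g : ℕ → S.E) (pg : ℕ → Fin n),
      (∀ k < c, S.src (g k) = pg k ∧ S.dst (g k) = pg (k+1)) →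
      ∀ k, k + 1 < l + (l' - l) → S.dst (g k) = S.src (g (k+1)) := by
    intro g pg hgc k hk
    rw [hap] at hk
    exact ((hgc k (by omega)).2).trans ((hgc (k+1) (by omega)).1).symm
  obtain ⟨ebar, fbar, hc1, hc2, hs1, hs2, hbb⟩ :=
    pump S l (l' - l) hπ e f (hchain e p hpc) (hchain f q hqc)
      (hme e p hpc hp) (hme f q hqc hq)
      (fun k hk m => hb k (by omega) m)
      (fun m => by rw [hap]; exact (hdd m).symm)
  refine key_limit S hN K hK i j ebar fbar hc1 hc2 ?_ ?_ hbb
  · rw [hs1, (hpc 0 (by omega)).1, hp0]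
  · rw [hs2, (hqc 0 (by omega)).1, hq0]

end CantorGDSAux

namespace CantorGDSAux

open CantorGDS

variable {d N n : ℕ} (S : CantorGDS d N n)

lemma caseE2 (hN : 2 ≤ N) (K : Fin n → Set (Fin d → ℝ)) (hK : S.IsAttractor K)
    (i j : Fin n) (c : ℕ) (e f : ℕ → S.E) (p q : ℕ → Fin n)
    (hp0 : p 0 = i) (hq0 : q 0 = j)
    (hpc : ∀ l < c, S.src (e l) = p l ∧ S.dst (e l) = p (l+1))
    (hqc : ∀ l < c, S.src (f l) = q l ∧ S.dst (f l) = q (l+1))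
    (hb : ∀ l, l ≤ c → ∀ m, (dd S e f l m).natAbs ≤ 1)
    (l l' : ℕ) (hll : l < l') (hl'c : l' ≤ c)
    (hδl : ∀ m, dd S e f l m = 0) (hδl' : ∀ m, dd S e f l' m = 0)
    (hpl' : p l' = q l) (hql' : q l' = p l) :
    (K i ∩ K j).Nonempty := by
  set π : ℕ := l' - l with hπdef
  have hπ : 0 < π := by omega
  set ehat : ℕ → S.E := fun k => if k < l' then e k else f (k - π) with hehat
  set fhat : ℕ → S.E := fun k => if k < l' then f k else e (k - π) with hfhat
  have hl'c' : l < c := by omega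
  -- chains up to l' + π
  have hch : ∀ (g g' : ℕ → S.E) (pg pg' : ℕ → Fin n),
      (∀ k < c, S.src (g k) = pg k ∧ S.dst (g k) = pg (k+1)) →
      (∀ k < c, S.src (g' k) = pg' k ∧ S.dst (g' k) = pg' (k+1)) →
      pg l' = pg' l →
      ∀ k, k + 1 < l + 2 * π →
        S.dst ((fun k => if k < l' then g k else g' (k - π)) k)
          = S.src ((fun k => if k < l' then g k else g' (k - π)) (k+1)) := by
    intro g g' pg pg' hgc hgc' hswap k hk
    by_cases h1 : k + 1 < l'
    · simp only [if_pos h1, if_pos (by omega : k < l')]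
      exact ((hgc k (by omega)).2).trans ((hgc (k+1) (by omega)).1).symm
    · by_cases h2 : k + 1 = l'
      · simp only [if_pos (by omega : k < l'), if_neg (by omega : ¬ k + 1 < l')]
        rw [show k + 1 - π = l by omega]
        have hd := (hgc k (by omega)).2
        rw [h2] at hd
        rw [hd, hswap, (hgc' l (by omega)).1]
      · simp only [if_neg (by omega : ¬ k < l'), if_neg (by omega : ¬ k + 1 < l')]
        rw [show k + 1 - π = (k - π) + 1 by omega]
        exact ((hgc' (k - π) (by omega)).2).trans ((hgc' (k - π + 1) (by omega)).1).symm
  -- wrap-around matching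
  have hme : S.dst (ehat (l + 2 * π - 1)) = S.src (ehat l) := by
    simp only [hehat, if_neg (by omega : ¬ l + 2 * π - 1 < l'), if_pos (by omega : l < l')]
    rw [show l + 2 * π - 1 - π = l' - 1 by omega]
    have hd := (hqc (l' - 1) (by omega)).2
    rw [show l' - 1 + 1 = l' by omega] at hd
    rw [hd, hql', (hpc l (by omega)).1]
  have hmf : S.dst (fhat (l + 2 * π - 1)) = S.src (fhat l) := by
    simp only [hfhat, if_neg (by omega : ¬ l + 2 * π - 1 < l'), if_pos (by omega : l < l')]
    rw [show l + 2 * π - 1 - π = l' - 1 by omega]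
    have hd := (hpc (l' - 1) (by omega)).2
    rw [show l' - 1 + 1 = l' by omega] at hd
    rw [hd, hpl', (hqc l (by omega)).1]
  -- code difference of the extended pair
  have claim1 : ∀ k, k ≤ l' → ∀ m, dd S ehat fhat k m = dd S e f k m := by
    intro k
    induction k with
    | zero => intro _ m; rw [dd_zero, dd_zero]
    | succ k ih =>
        intro hk m
        rw [dd_succ, dd_succ, ih (by omega) m]
        simp only [hehat, hfhat, if_pos (by omega : k < l')]
  have claim2 : ∀ r m, dd S ehat fhat (l' + r) m = - dd S e f (l + r) m := by
    intro r
    induction r with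
    | zero =>
        intro m
        rw [Nat.add_zero, Nat.add_zero, claim1 l' le_rfl m, hδl' m, hδl m, neg_zero]
    | succ r ih =>
        intro m
        rw [show l' + (r+1) = (l' + r) + 1 by omega, dd_succ, ih m]
        simp only [hehat, hfhat, if_neg (by omega : ¬ l' + r < l')]
        rw [show l' + r - π = l + r by omega,
          show l + (r+1) = (l + r) + 1 by omega, dd_succ]
        ring
  obtain ⟨ebar, fbar, hc1, hc2, hs1, hs2, hbb⟩ :=
    pump S l (2 * π) (by omega) ehat fhat
      (hch e f p q hpc hqc hpl') (hch f e q p hqc hpc hql') hme hmf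
      (fun k hk m => by
        rcases le_or_gt k l' with h | h
        · rw [claim1 k h m]; exact hb k (by omega) m
        · rw [show k = l' + (k - l') by omega, claim2 (k - l') m, Int.natAbs_neg]
          exact hb (l + (k - l')) (by omega) m)
      (fun m => by
        rw [show l + 2 * π = l' + π by omega, claim2 π m, claim1 l (by omega) m,
          show l + π = l' by omega, hδl' m, hδl m, neg_zero])
  refine key_limit S hN K hK i j ebar fbar hc1 hc2 ?_ ?_ hbb
  · rw [hs1]
    simp only [hehat, if_pos (by omega : 0 < l')]
    rw [(hpc 0 (by omega)).1, hp0]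
  · rw [hs2]
    simp only [hfhat, if_pos (by omega : 0 < l')]
    rw [(hqc 0 (by omega)).1, hq0]

end CantorGDSAux

namespace CantorGDSAux

open CantorGDS

variable {d N n : ℕ} (S : CantorGDS d N n)

lemma caseE3 (hN : 2 ≤ N) (K : Fin n → Set (Fin d → ℝ)) (hK : S.IsAttractor K)
    (i j : Fin n) (c : ℕ) (e f : ℕ → S.E) (p q : ℕ → Fin n)
    (hp0 : p 0 = i) (hq0 : q 0 = j)
    (hpc : ∀ l < c, S.src (e l) = p l ∧ S.dst (e l) = p (l+1))
    (hqc : ∀ l < c, S.src (f l) = q l ∧ S.dst (f l) = q (l+1))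
    (hb : ∀ l, l ≤ c → ∀ m, (dd S e f l m).natAbs ≤ 1)
    (l l' m0 m0' : ℕ) (hll : l < l') (hl'c : l' ≤ c) (hmm : m0 < m0') (hm'c : m0' ≤ c)
    (hκl : kappa S e f l = d) (hκm : kappa S e f m0 = d)
    (hpp : p l = p l') (hqq : q m0 = q m0') :
    (K i ∩ K j).Nonempty := by
  set b0 : ℕ := min l m0 with hb0def
  set B : ℕ := max l m0 with hBdef
  have hb0c : b0 ≤ c := by omega
  have hBc : B ≤ c := by omega
  have hκb0 : kappa S e f b0 = d := by
    rcases min_choice l m0 with h | h <;> rw [hb0def, h] <;> assumption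
  have hfull : ∀ k, b0 ≤ k → k ≤ c → ∀ m, dd S e f k m = dd S e f b0 m := by
    intro k hk hkc
    have h1 : kappa S e f k = d := by
      have h2 := kappa_mono S hN e f c hb hk hkc
      have h3 := kappa_le S e f k
      omega
    exact dd_eq_of_kappa_eq S hN e f c hb hk hkc (by rw [hκb0, h1])
  have hsupp : ∀ m, dd S e f b0 m ≠ 0 := by
    intro m
    have hcard : (Finset.univ.filter (fun m : Fin d => dd S e f b0 m ≠ 0)).card
        = Fintype.card (Fin d) := by rw [Fintype.card_fin]; exact hκb0
    have h1 := Finset.eq_univ_of_card _ hcard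
    have hm : m ∈ Finset.univ.filter (fun m : Fin d => dd S e f b0 m ≠ 0) := by
      rw [h1]; exact Finset.mem_univ m
    exact (Finset.mem_filter.mp hm).2
  have hsgn : ∀ m, dd S e f b0 m = 1 ∨ dd S e f b0 m = -1 := by
    intro m
    have h1 := hb b0 hb0c m
    have h2 := hsupp m
    omega
  -- forced digits in the full-support region
  have hforce : ∀ k, b0 ≤ k → k + 1 ≤ c → ∀ m,
      2 * (S.t (e k) m : ℤ) = ((N:ℤ) - 1) * (1 - dd S e f b0 m) ∧
      2 * (S.t (f k) m : ℤ) = ((N:ℤ) - 1) * (1 + dd S e f b0 m) := by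
    intro k hk hkc m
    have h1 := dd_succ S e f k m
    have h2 := hfull k hk (by omega) m
    have h3 := hfull (k+1) (by omega) (by omega) m
    obtain ⟨he1, he2⟩ := t_bounds S hN (e k) m
    obtain ⟨hf1, hf2⟩ := t_bounds S hN (f k) m
    have hN' : (2:ℤ) ≤ (N:ℤ) := by exact_mod_cast hN
    rw [h2, h3] at h1
    rcases hsgn m with hs | hs
    · rw [hs] at h1 ⊢
      ring_nf at h1 ⊢
      omega
    · rw [hs] at h1 ⊢
      ring_nf at h1 ⊢
      omega
  set πe : ℕ := l' - l with hπedef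
  set πm : ℕ := m0' - m0 with hπmdef
  have hπe : 0 < πe := by omega
  have hπm : 0 < πm := by omega
  set ebar : ℕ → S.E := fun k => e (wrap l πe k) with hebar
  set fbar : ℕ → S.E := fun k => f (wrap m0 πm k) with hfbar
  have hchaine : ∀ k, k + 1 < l + πe → S.dst (e k) = S.src (e (k+1)) := by
    intro k hk
    exact ((hpc k (by omega)).2).trans ((hpc (k+1) (by omega)).1).symm
  have hchainf : ∀ k, k + 1 < m0 + πm → S.dst (f k) = S.src (f (k+1)) := by
    intro k hk
    exact ((hqc k (by omega)).2).trans ((hqc (k+1) (by omega)).1).symm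
  have hmatche : S.dst (e (l + πe - 1)) = S.src (e l) := by
    rw [show l + πe - 1 = l' - 1 by omega]
    have h1 := (hpc (l' - 1) (by omega)).2
    rw [show l' - 1 + 1 = l' by omega] at h1
    rw [h1, ← hpp, (hpc l (by omega)).1]
  have hmatchf : S.dst (f (m0 + πm - 1)) = S.src (f (m0)) := by
    rw [show m0 + πm - 1 = m0' - 1 by omega]
    have h1 := (hqc (m0' - 1) (by omega)).2
    rw [show m0' - 1 + 1 = m0' by omega] at h1
    rw [h1, ← hqq, (hqc m0 (by omega)).1]
  have hce : ∀ k, S.dst (ebar k) = S.src (ebar (k+1)) :=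
    fun k => chain_wrap S hπe e hchaine hmatche k
  have hcf : ∀ k, S.dst (fbar k) = S.src (fbar (k+1)) :=
    fun k => chain_wrap S hπm f hchainf hmatchf k
  -- digit values of the pumped walks
  have hte : ∀ k, l ≤ k → ∀ m,
      2 * (S.t (ebar k) m : ℤ) = ((N:ℤ) - 1) * (1 - dd S e f b0 m) := by
    intro k hk m
    have hw1 : l ≤ wrap l πe k := wrap_ge k hk
    have hw2 : wrap l πe k < l + πe := wrap_lt hπe l k
    exact (hforce (wrap l πe k) (by omega) (by omega) m).1
  have htf : ∀ k, m0 ≤ k → ∀ m,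
      2 * (S.t (fbar k) m : ℤ) = ((N:ℤ) - 1) * (1 + dd S e f b0 m) := by
    intro k hk m
    have hw1 : m0 ≤ wrap m0 πm k := wrap_ge k hk
    have hw2 : wrap m0 πm k < m0 + πm := wrap_lt hπm m0 k
    exact (hforce (wrap m0 πm k) (by omega) (by omega) m).2
  have claim1 : ∀ k, k ≤ B → ∀ m, dd S ebar fbar k m = dd S e f k m := by
    intro k
    induction k with
    | zero => intro _ m; rw [dd_zero, dd_zero]
    | succ k ih =>
        intro hk m
        rw [dd_succ, dd_succ, ih (by omega) m]
        have he : (S.t (ebar k) m : ℤ) = (S.t (e k) m : ℤ) := by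
          rcases lt_or_ge k l with h | h
          · have hw : wrap l πe k = k := wrap_eq_self (by omega)
            simp only [hebar, hw]
          · have h1 := hte k h m
            have h2 := (hforce k (by omega) (by omega) m).1
            omega
        have hf : (S.t (fbar k) m : ℤ) = (S.t (f k) m : ℤ) := by
          rcases lt_or_ge k m0 with h | h
          · have hw : wrap m0 πm k = k := wrap_eq_self (by omega)
            simp only [hfbar, hw]
          · have h1 := htf k h m
            have h2 := (hforce k (by omega) (by omega) m).2
            omega
        rw [he, hf]
  have claim2 : ∀ r m, dd S ebar fbar (B + r) m = dd S e f b0 m := by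
    intro r
    induction r with
    | zero =>
        intro m
        rw [Nat.add_zero, claim1 B le_rfl m]
        exact hfull B (by omega) hBc m
    | succ r ih =>
        intro m
        have hrec := dd_succ S ebar fbar (B + r) m
        rw [ih m] at hrec
        have h1 := hte (B + r) (by omega) m
        have h2 := htf (B + r) (by omega) m
        rw [show B + (r+1) = (B + r) + 1 by omega]
        rw [hrec]
        nlinarith [h1, h2]
  refine key_limit S hN K hK i j ebar fbar hce hcf ?_ ?_ (fun k m => ?_)
  · rw [hebar]
    show S.src (e (wrap l πe 0)) = i
    rw [wrap_zero, (hpc 0 (by omega)).1, hp0]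
  · rw [hfbar]
    show S.src (f (wrap m0 πm 0)) = j
    rw [wrap_zero, (hqc 0 (by omega)).1, hq0]
  · rcases le_or_gt k B with h | h
    · rw [claim1 k h m]; exact hb k (by omega) m
    · rw [show k = B + (k - B) by omega, claim2 (k - B) m]
      exact hb b0 hb0c m

end CantorGDSAux

namespace CantorGDSAux

open CantorGDS

variable {d N n : ℕ} (S : CantorGDS d N n)

lemma backward (hd : 1 ≤ d) (hN : 2 ≤ N)
    (K : Fin n → Set (Fin d → ℝ)) (hK : S.IsAttractor K) (i j : Fin n)
    (x : Fin d → ℝ) (hxi : x ∈ CantorGDS.Q S (cConst n d) i)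
    (hxj : x ∈ CantorGDS.Q S (cConst n d) j) :
    (K i ∩ K j).Nonempty := by
  classical
  set c : ℕ := cConst n d with hcdef
  obtain ⟨e, p, hp0, hpc, ξ, hξ, hxe⟩ := mem_Q_elim S c i x hxi
  obtain ⟨f, q, hq0, hqc, η, hη, hxf⟩ := mem_Q_elim S c j x hxj
  have hN1 : 1 ≤ N := by omega
  -- the final codes are adjacent
  have hbc : ∀ m, (dd S e f c m).natAbs ≤ 1 := by
    intro m
    have h1 : S.compWalk e c ξ m = S.compWalk f c η m := by rw [← hxe, ← hxf]
    rw [compWalk_apply S hN1, compWalk_apply S hN1] at h1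
    have hpow : (0:ℝ) < (N:ℝ)^c := by positivity
    have h2 : ξ m + (code S e c m : ℝ) = η m + (code S f c m : ℝ) := by
      field_simp at h1
      exact h1
    have hξm := hξ m
    have hηm := hη m
    simp only [Set.mem_Icc] at hξm hηm
    have h3 : ((code S e c m : ℝ) - (code S f c m : ℝ)) = η m - ξ m := by linarith
    have h4 : ((dd S e f c m : ℤ) : ℝ) ≤ 1 := by
      simp only [dd]; push_cast; linarith
    have h5 : (-1 : ℝ) ≤ ((dd S e f c m : ℤ) : ℝ) := by
      simp only [dd]; push_cast; linarith
    have h6 : dd S e f c m ≤ 1 := by exact_mod_cast h4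
    have h7 : (-1 : ℤ) ≤ dd S e f c m := by exact_mod_cast h5
    omega
  have hb : ∀ l, l ≤ c → ∀ m, (dd S e f l m).natAbs ≤ 1 :=
    dd_bound_all S hN e f c hbc
  -- case analysis
  by_cases hE0 : ∃ l, l ≤ c ∧ (∀ m, dd S e f l m = 0) ∧ p l = q l
  · obtain ⟨l, h1, h2, h3⟩ := hE0
    exact caseE0 S hN K hK i j c e f p q hp0 hq0 hpc hqc hb l h1 h2 h3
  by_cases hE1 : ∃ l l', l < l' ∧ l' ≤ c ∧ p l = p l' ∧ q l = q l' ∧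
      ∀ m, dd S e f l m = dd S e f l' m
  · obtain ⟨l, l', h1, h2, h3, h4, h5⟩ := hE1
    exact caseE1 S hN K hK i j c e f p q hp0 hq0 hpc hqc hb l l' h1 h2 h3 h4 h5
  by_cases hE2 : ∃ l l', l < l' ∧ l' ≤ c ∧ (∀ m, dd S e f l m = 0) ∧
      (∀ m, dd S e f l' m = 0) ∧ p l' = q l ∧ q l' = p l
  · obtain ⟨l, l', h1, h2, h3, h4, h5, h6⟩ := hE2
    exact caseE2 S hN K hK i j c e f p q hp0 hq0 hpc hqc hb l l' h1 h2 h3 h4 h5 h6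
  -- counting
  have hzero : ∀ lz, kappa S e f lz = 0 → ∀ m, dd S e f lz m = 0 := by
    intro lz h m
    by_contra hne
    have hmem : m ∈ Finset.univ.filter (fun m : Fin d => dd S e f lz m ≠ 0) :=
      Finset.mem_filter.mpr ⟨Finset.mem_univ m, hne⟩
    rw [Finset.card_eq_zero.mp h] at hmem
    simp at hmem
  set T : Finset ℕ := Finset.range (c+1) with hTdef
  set Z : Finset ℕ := T.filter (fun l => kappa S e f l = 0) with hZdef
  set T' : Finset ℕ := T.filter (fun l => ¬ kappa S e f l = 0) with hT'def
  set Fd : Finset ℕ := T'.filter (fun l => kappa S e f l = d) with hFdef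
  set M : Finset ℕ := T'.filter (fun l => ¬ kappa S e f l = d) with hMdef
  have hpart : Z.card + Fd.card + M.card = c + 1 := by
    have h1 := Finset.card_filter_add_card_filter_not
      (s := T) (p := fun l => kappa S e f l = 0)
    have h2 := Finset.card_filter_add_card_filter_not
      (s := T') (p := fun l => kappa S e f l = d)
    have h3 : T.card = c + 1 := Finset.card_range (c+1)
    have h4 : (Finset.filter (fun a => ¬ kappa S e f a = 0) T) = T' := rfl
    have h5 : (Finset.filter (fun a => kappa S e f a = d) T') = Fd := rfl
    have h6 : (Finset.filter (fun a => ¬ kappa S e f a = d) T') = M := rfl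
    have h7 : (Finset.filter (fun l => kappa S e f l = 0) T) = Z := rfl
    rw [h4, h7] at h1
    rw [h5, h6] at h2
    omega
  -- bound on Z
  set X : Finset (Fin n × Fin n) :=
    (Finset.univ : Finset (Fin n × Fin n)).filter (fun ab => ab.1 < ab.2) with hXdef
  have hZmem : ∀ l ∈ Z, l ≤ c ∧ (∀ m, dd S e f l m = 0) ∧ p l ≠ q l := by
    intro l hl
    obtain ⟨hlT, hκ⟩ := Finset.mem_filter.mp hl
    have hlc : l ≤ c := by
      have := Finset.mem_range.mp hlT; omega
    have hz := hzero l hκ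
    refine ⟨hlc, hz, fun hpq => hE0 ⟨l, hlc, hz, hpq⟩⟩
  set g : ℕ → Fin n × Fin n := fun l => if p l < q l then (p l, q l) else (q l, p l)
    with hgdef
  have hgmem : ∀ l ∈ Z, g l ∈ X := by
    intro l hl
    obtain ⟨hlc, hz, hne⟩ := hZmem l hl
    simp only [hgdef, hXdef, Finset.mem_filter, Finset.mem_univ, true_and]
    by_cases h : p l < q l
    · rw [if_pos h]; exact h
    · rw [if_neg h]
      exact lt_of_le_of_ne (not_lt.mp h) (Ne.symm hne)
  have hgkey : ∀ l l', l ∈ Z → l' ∈ Z → l < l' → g l = g l' → False := by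
    intro l l' hl hl' hlt heq
    obtain ⟨hlc, hz, hne⟩ := hZmem l hl
    obtain ⟨hlc', hz', hne'⟩ := hZmem l' hl'
    have hdd : ∀ m, dd S e f l m = dd S e f l' m := fun m => by rw [hz m, hz' m]
    simp only [hgdef] at heq
    by_cases c1 : p l < q l <;> by_cases c2 : p l' < q l' <;>
      simp only [if_pos, if_neg, c1, c2, if_true, if_false, Prod.mk.injEq] at heq
    · exact hE1 ⟨l, l', hlt, hlc', heq.1, heq.2, hdd⟩
    · exact hE2 ⟨l, l', hlt, hlc', hz, hz', heq.2.symm, heq.1.symm⟩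
    · exact hE2 ⟨l, l', hlt, hlc', hz, hz', heq.1.symm, heq.2.symm⟩
    · exact hE1 ⟨l, l', hlt, hlc', heq.2, heq.1, hdd⟩
  have hZX : Z.card ≤ X.card := by
    apply Finset.card_le_card_of_injOn g hgmem
    intro a ha b hb heq
    by_contra hne
    rcases Nat.lt_trichotomy a b with h | h | h
    · exact hgkey a b (Finset.mem_coe.mp ha) (Finset.mem_coe.mp hb) h heq
    · exact hne h
    · exact hgkey b a (Finset.mem_coe.mp hb) (Finset.mem_coe.mp ha) h heq.symm
  -- bound on M
  have hMmem : ∀ l ∈ M, l ≤ c ∧ kappa S e f l ≠ 0 ∧ kappa S e f l ≠ d := by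
    intro l hl
    obtain ⟨hlT', hκd⟩ := Finset.mem_filter.mp hl
    obtain ⟨hlT, hκ0⟩ := Finset.mem_filter.mp hlT'
    exact ⟨by have := Finset.mem_range.mp hlT; omega, hκ0, hκd⟩
  have hMX : M.card ≤ (d - 1) * (n * n) := by
    have h1 : M.card ≤ ((Finset.Icc 1 (d-1)) ×ˢ
        (Finset.univ : Finset (Fin n × Fin n))).card := by
      apply Finset.card_le_card_of_injOn (fun l => (kappa S e f l, p l, q l))
      · intro l hl
        obtain ⟨hlc, h0, hdd⟩ := hMmem l hl
        have := kappa_le S e f l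
        simp only [Finset.mem_coe, Finset.mem_product, Finset.mem_Icc, Finset.mem_univ, and_true]
        omega
      · intro l1 hm1 l2 hm2 heq
        simp only [Prod.mk.injEq] at heq
        by_contra hne
        have key : ∀ l l', l ∈ M → l' ∈ M → l < l' →
            kappa S e f l = kappa S e f l' → p l = p l' → q l = q l' → False := by
          intro l l' hl hl' hlt hκ hp hq
          have hlc' := (hMmem l' hl').1
          have hdd := dd_eq_of_kappa_eq S hN e f c hb (le_of_lt hlt) hlc' hκ
          exact hE1 ⟨l, l', hlt, hlc', hp, hq, fun m => (hdd m).symm⟩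
        rcases Nat.lt_trichotomy l1 l2 with h | h | h
        · exact key l1 l2 (Finset.mem_coe.mp hm1) (Finset.mem_coe.mp hm2) h
            heq.1 heq.2.1 heq.2.2
        · exact hne h
        · exact key l2 l1 (Finset.mem_coe.mp hm2) (Finset.mem_coe.mp hm1) h
            heq.1.symm heq.2.1.symm heq.2.2.symm
    calc M.card ≤ _ := h1
      _ = (d - 1) * (n * n) := by
          rw [Finset.card_product, Nat.card_Icc]
          simp [Fintype.card_prod]
  -- bound on Fd or success
  have hFmem : ∀ l ∈ Fd, l ≤ c ∧ kappa S e f l = d := by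
    intro l hl
    obtain ⟨hlT', hκd⟩ := Finset.mem_filter.mp hl
    obtain ⟨hlT, -⟩ := Finset.mem_filter.mp hlT'
    exact ⟨by have := Finset.mem_range.mp hlT; omega, hκd⟩
  by_cases hrepp : ∃ l ∈ Fd, ∃ l' ∈ Fd, l < l' ∧ p l = p l'
  · by_cases hrepq : ∃ l ∈ Fd, ∃ l' ∈ Fd, l < l' ∧ q l = q l'
    · obtain ⟨l, hl, l', hl', hlt, hpp⟩ := hrepp
      obtain ⟨m0, hm0, m0', hm0', hmt, hqq⟩ := hrepq
      exact caseE3 S hN K hK i j c e f p q hp0 hq0 hpc hqc hb l l' m0 m0'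
        hlt (hFmem l' hl').1 hmt (hFmem m0' hm0').1 (hFmem l hl).2 (hFmem m0 hm0).2 hpp hqq
    · -- q injective on Fd
      have hF : Fd.card ≤ n := by
        have h1 : Fd.card ≤ (Finset.univ : Finset (Fin n)).card := by
          apply Finset.card_le_card_of_injOn (fun l => q l)
            (fun l _ => Finset.mem_univ _)
          intro a ha b hb heq
          by_contra hne
          rcases Nat.lt_trichotomy a b with h | h | h
          · exact hrepq ⟨a, Finset.mem_coe.mp ha, b, Finset.mem_coe.mp hb, h, heq⟩
          · exact hne h
          · exact hrepq ⟨b, Finset.mem_coe.mp hb, a, Finset.mem_coe.mp ha, h, heq.symm⟩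
        simpa using h1
      exfalso
      have hX2 : 2 * X.card + n = n * n := card_lt_pairs n
      have hcval : c = (d - 1) * n ^ 2 + (n ^ 2 + n) / 2 + d - 1 := rfl
      have hA : (d - 1) * n ^ 2 = (d - 1) * (n * n) := by ring
      have hev : (n ^ 2 + n) / 2 * 2 = n ^ 2 + n := by
        apply Nat.div_mul_cancel
        have h1 : n ^ 2 + n = n * (n + 1) := by ring
        rw [h1]
        exact (Nat.even_mul_succ_self n).two_dvd
      have hsq : n ^ 2 = n * n := by ring
      omega
  · -- p injective on Fd
    have hF : Fd.card ≤ n := by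
      have h1 : Fd.card ≤ (Finset.univ : Finset (Fin n)).card := by
        apply Finset.card_le_card_of_injOn (fun l => p l)
          (fun l _ => Finset.mem_univ _)
        intro a ha b hb heq
        by_contra hne
        rcases Nat.lt_trichotomy a b with h | h | h
        · exact hrepp ⟨a, Finset.mem_coe.mp ha, b, Finset.mem_coe.mp hb, h, heq⟩
        · exact hne h
        · exact hrepp ⟨b, Finset.mem_coe.mp hb, a, Finset.mem_coe.mp ha, h, heq.symm⟩
      simpa using h1
    exfalso
    have hX2 : 2 * X.card + n = n * n := card_lt_pairs n
    have hcval : c = (d - 1) * n ^ 2 + (n ^ 2 + n) / 2 + d - 1 := rfl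
    have hA : (d - 1) * n ^ 2 = (d - 1) * (n * n) := by ring
    have hev : (n ^ 2 + n) / 2 * 2 = n ^ 2 + n := by
      apply Nat.div_mul_cancel
      have h1 : n ^ 2 + n = n * (n + 1) := by ring
      rw [h1]
      exact (Nat.even_mul_succ_self n).two_dvd
    have hsq : n ^ 2 = n * n := by ring
    omega

end CantorGDSAux

/-- **Theorem (finite criterion).** For a Cantor-type graph-directed attractor in `ℝ^d`
and distinct `i, j`, `K i ∩ K j ≠ ∅` iff the level-`c(n,d)` approximations
`Q_{i,c(n,d)}` and `Q_{j,c(n,d)}` intersect, where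
`c(n,d) = (d-1)n² + (n²+n)/2 + d - 1`. -/
theorem intersect_iff_approx_intersect
    {d N n : ℕ} (hd : 1 ≤ d) (hN : 2 ≤ N) (hn : 1 ≤ n)
    (S : CantorGDS d N n) (K : Fin n → Set (Fin d → ℝ)) (hK : S.IsAttractor K)
    (i j : Fin n) (hij : i ≠ j) :
    (K i ∩ K j).Nonempty ↔
      (CantorGDS.Q S (cConst n d) i ∩ CantorGDS.Q S (cConst n d) j).Nonempty := by
  constructor
  · rintro ⟨x, hxi, hxj⟩
    exact ⟨x, CantorGDSAux.attractor_subset_Q S hN K hK (cConst n d) i hxi,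
      CantorGDSAux.attractor_subset_Q S hN K hK (cConst n d) j hxj⟩
  · rintro ⟨x, hxi, hxj⟩
    exact CantorGDSAux.backward S hd hN K hK i j x hxi hxj
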